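/- Let 1 ≤ k < n and h ∈ ℝ^n. Define ĥ ∈ ℝ^n whose first n−k entries are the magnitudes |h_1|,…,|h_{n−k}| sorted in nondecreasing order and whose last k entries are |h_{n−k+1}|,…,|h_n|. Let S_sec be the set of w on the unit Euclidean sphere of ℝ^n with Σ_{i=n−k+1}^n |w_i| ≥ Σ_{i=1}^{n−k} |w_i|. Let 0 ≤ c ≤ n−k be an integer and set ν = (ĥᵀz − Σ_{i=1}^c ĥ_i)/(n−c). If ν ≥ 0 and ν ≥ ĥ_i for all 1 ≤ i ≤ c, then sup_{w ∈ S_sec} hᵀw ≤ sqrt( Σ_{i=c+1}^n ĥ_i² − (ĥᵀz − Σ_{i=1}^c ĥ_i)²/(n−c) ). -/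

import Mathlib

open Finset

lemma filter_lt_eq_map {n m : ℕ} (hm : m ≤ n) :
    Finset.univ.filter (fun i : Fin n => (i:ℕ) < m) =
      Finset.univ.map (Fin.castLEEmb hm) := by
  ext i
  simp only [mem_filter, mem_univ, true_and, mem_map, Fin.castLEEmb_apply]
  constructor
  · intro hi; exact ⟨⟨i, hi⟩, rfl⟩
  · rintro ⟨j, rfl⟩; exact j.isLt

lemma sum_head {n m : ℕ} (hm : m ≤ n) (F : Fin n → ℝ) :
    ∑ i ∈ Finset.univ.filter (fun i : Fin n => (i:ℕ) < m), F i
      = ∑ j : Fin m, F (Fin.castLE hm j) := by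
  rw [filter_lt_eq_map hm, Finset.sum_map]; rfl

lemma card_filter_ge {n m : ℕ} (hm : m ≤ n) :
    (Finset.univ.filter (fun i : Fin n => m ≤ (i:ℕ))).card = n - m := by
  have h1 : (Finset.univ.filter (fun i : Fin n => (i:ℕ) < m)).card = m := by
    rw [filter_lt_eq_map hm]; simp
  have h2 := Finset.card_filter_add_card_filter_not
    (s := (Finset.univ : Finset (Fin n))) (p := fun i : Fin n => (i:ℕ) < m)
  simp only [not_lt, Finset.card_univ, Fintype.card_fin] at h2
  omega

noncomputable def extPerm {n m : ℕ} (hm : m ≤ n) (σ : Equiv.Perm (Fin m)) :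
    Equiv.Perm (Fin n) where
  toFun i := if hi : (i:ℕ) < m then Fin.castLE hm (σ ⟨i, hi⟩) else i
  invFun i := if hi : (i:ℕ) < m then Fin.castLE hm (σ.symm ⟨i, hi⟩) else i
  left_inv i := by
    by_cases hi : (i:ℕ) < m
    · have h2 : ((Fin.castLE hm (σ ⟨i, hi⟩) : Fin n) : ℕ) < m := (σ ⟨i, hi⟩).isLt
      simp only [dif_pos hi, dif_pos h2]
      have : (⟨((Fin.castLE hm (σ ⟨i, hi⟩) : Fin n) : ℕ), h2⟩ : Fin m) = σ ⟨i, hi⟩ := rfl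
      rw [this, Equiv.symm_apply_apply]
      simp [Fin.ext_iff]
    · simp only [dif_neg hi]
  right_inv i := by
    by_cases hi : (i:ℕ) < m
    · have h2 : ((Fin.castLE hm (σ.symm ⟨i, hi⟩) : Fin n) : ℕ) < m := (σ.symm ⟨i, hi⟩).isLt
      simp only [dif_pos hi, dif_pos h2]
      have : (⟨((Fin.castLE hm (σ.symm ⟨i, hi⟩) : Fin n) : ℕ), h2⟩ : Fin m) = σ.symm ⟨i, hi⟩ := rfl
      rw [this, Equiv.apply_symm_apply]
      simp [Fin.ext_iff]
    · simp only [dif_neg hi]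

lemma extPerm_castLE {n m : ℕ} (hm : m ≤ n) (σ : Equiv.Perm (Fin m)) (j : Fin m) :
    extPerm hm σ (Fin.castLE hm j) = Fin.castLE hm (σ j) := by
  have hj : ((Fin.castLE hm j : Fin n) : ℕ) < m := j.isLt
  show (if hi : ((Fin.castLE hm j : Fin n) : ℕ) < m then _ else _) = _
  rw [dif_pos hj]
  congr 1

lemma extPerm_of_ge {n m : ℕ} (hm : m ≤ n) (σ : Equiv.Perm (Fin m)) (i : Fin n)
    (hi : ¬ (i:ℕ) < m) : extPerm hm σ i = i := by
  show (if h : (i:ℕ) < m then _ else _) = _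
  rw [dif_neg hi]


/-- `sortLow n k f` sorts the first `n - k` entries of `f` in nondecreasing order. -/
noncomputable def sortLow (n k : ℕ) (f : Fin n → ℝ) : Fin (n - k) → ℝ :=
  (fun j : Fin (n - k) => f (Fin.castLE (Nat.sub_le n k) j)) ∘
    Tuple.sort (fun j : Fin (n - k) => f (Fin.castLE (Nat.sub_le n k) j))

/-- `ĥ`: the magnitudes of the first `n - k` entries of `h` sorted in nondecreasing
order, followed by the magnitudes of the last `k` entries of `h`. -/
noncomputable def hatH (n k : ℕ) (h : Fin n → ℝ) : Fin n → ℝ := fun i =>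
  if hi : (i : ℕ) < n - k then sortLow n k (fun j => |h j|) ⟨i, hi⟩ else |h i|

/-- with `ν = (ĥᵀz - ∑_{i=1}^c ĥ i)/(n - c)`, if `ν ≥ 0` and `ν ≥ ĥ i`
for `1 ≤ i ≤ c`, then
`sup_{w ∈ S_sec} hᵀw ≤ sqrt(∑_{i=c+1}^n ĥ i² - (ĥᵀz - ∑_{i=1}^c ĥ i)²/(n-c))`,
where `S_sec` is the set of unit vectors with `∑_{i=n-k+1}^n |w i| ≥ ∑_{i=1}^{n-k} |w i|`. -/
theorem stmt16 (n k c : ℕ) (hk1 : 1 ≤ k) (hkn : k < n) (hc : c ≤ n - k)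
    (h : Fin n → ℝ)
    (z : Fin n → ℝ) (hz : z = fun i : Fin n => if (i : ℕ) < n - k then (1 : ℝ) else -1)
    (ν : ℝ)
    (hν : ν = ((∑ i, hatH n k h i * z i) -
      ∑ i ∈ Finset.univ.filter (fun i : Fin n => (i : ℕ) < c), hatH n k h i) / (n - c))
    (hν0 : 0 ≤ ν)
    (hνge : ∀ i : Fin n, (i : ℕ) < c → hatH n k h i ≤ ν) :
    sSup {v : ℝ | ∃ w : Fin n → ℝ, (∑ i, (w i) ^ 2 = 1) ∧
        (∑ i ∈ Finset.univ.filter (fun i : Fin n => (i : ℕ) < n - k), |w i| ≤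
          ∑ i ∈ Finset.univ.filter (fun i : Fin n => n - k ≤ (i : ℕ)), |w i|) ∧
        v = ∑ i, h i * w i} ≤
      Real.sqrt ((∑ i ∈ Finset.univ.filter (fun i : Fin n => c ≤ (i : ℕ)), (hatH n k h i) ^ 2) -
        ((∑ i, hatH n k h i * z i) -
          ∑ i ∈ Finset.univ.filter (fun i : Fin n => (i : ℕ) < c), hatH n k h i) ^ 2 / (n - c)) := by
  have hmn : n - k ≤ n := Nat.sub_le n k
  set A : Fin n → ℝ := hatH n k h with hA
  have hz1 : ∀ i : Fin n, (i:ℕ) < n - k → z i = 1 := by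
    intro i hi; rw [hz]; simp [hi]
  have hz2 : ∀ i : Fin n, ¬ (i:ℕ) < n - k → z i = -1 := by
    intro i hi; rw [hz]; simp [hi]
  have hzsq : ∀ i : Fin n, z i ^ 2 = 1 := by
    intro i
    by_cases hi : (i:ℕ) < n - k
    · rw [hz1 i hi]; ring
    · rw [hz2 i hi]; ring
  set σ : Equiv.Perm (Fin (n-k)) :=
    Tuple.sort (fun j : Fin (n-k) => |h (Fin.castLE (Nat.sub_le n k) j)|) with hσ
  set τ := extPerm hmn σ with hτ
  have hAτ : ∀ i, A i = |h (τ i)| := by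
    intro i
    by_cases hi : (i:ℕ) < n - k
    · have hci : (Fin.castLE hmn ⟨(i:ℕ), hi⟩ : Fin n) = i := rfl
      have hτi : τ i = Fin.castLE hmn (σ ⟨(i:ℕ), hi⟩) := by
        have hx := extPerm_castLE hmn σ ⟨(i:ℕ), hi⟩
        rw [hci] at hx
        exact hx
      rw [hτi, hA]
      show hatH n k h i = _
      unfold hatH
      rw [dif_pos hi]
      rfl
    · have hτi : τ i = i := extPerm_of_ge hmn σ i hi
      rw [hτi, hA]
      show hatH n k h i = _
      unfold hatH
      rw [dif_neg hi]
  -- basic numerics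
  have hcn : c < n := lt_of_le_of_lt hc (by omega)
  have hd : (0:ℝ) < (n:ℝ) - c := by
    have : (c:ℝ) < n := by exact_mod_cast hcn
    linarith
  set S : ℝ := (∑ i, A i * z i) -
    ∑ i ∈ Finset.univ.filter (fun i : Fin n => (i:ℕ) < c), A i with hS
  have hνd : ν * ((n:ℝ) - c) = S := by
    rw [hν]; field_simp
  apply Real.sSup_le _ (Real.sqrt_nonneg _)
  rintro v ⟨w, hw1, hw2, rfl⟩
  set u : Fin n → ℝ := fun i => |w (τ i)| with hu
  have hu0 : ∀ i, 0 ≤ u i := fun i => abs_nonneg _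
  have hsum2 : ∑ i, u i ^ 2 = 1 := by
    have := Equiv.sum_comp τ (fun i => |w i| ^ 2)
    simp only [sq_abs] at this
    rw [hu]
    simp only [sq_abs]
    rw [this, hw1]
  have hhead : ∑ i ∈ Finset.univ.filter (fun i : Fin n => (i:ℕ) < n - k), u i
      = ∑ i ∈ Finset.univ.filter (fun i : Fin n => (i:ℕ) < n - k), |w i| := by
    rw [sum_head hmn, sum_head hmn]
    have key : ∀ j : Fin (n-k), u (Fin.castLE hmn j) = |w (Fin.castLE hmn (σ j))| := by
      intro j
      rw [hu]
      show |w (τ (Fin.castLE hmn j))| = _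
      rw [hτ, extPerm_castLE]
    rw [Finset.sum_congr rfl (fun j _ => key j)]
    exact Equiv.sum_comp σ (fun j => |w (Fin.castLE hmn j)|)
  have htail : ∑ i ∈ Finset.univ.filter (fun i : Fin n => n - k ≤ (i:ℕ)), u i
      = ∑ i ∈ Finset.univ.filter (fun i : Fin n => n - k ≤ (i:ℕ)), |w i| := by
    apply Finset.sum_congr rfl
    intro i hi
    simp only [mem_filter, mem_univ, true_and] at hi
    rw [hu]
    show |w (τ i)| = _
    rw [hτ, extPerm_of_ge hmn σ i (not_lt.mpr hi)]
  have hzu : ∑ i, z i * u i ≤ 0 := by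
    have hsplit := Finset.sum_filter_add_sum_filter_not Finset.univ
      (fun i : Fin n => (i:ℕ) < n - k) (fun i => z i * u i)
    have e1 : ∑ i ∈ Finset.univ.filter (fun i : Fin n => (i:ℕ) < n - k), z i * u i
        = ∑ i ∈ Finset.univ.filter (fun i : Fin n => (i:ℕ) < n - k), u i := by
      apply Finset.sum_congr rfl
      intro i hi
      simp only [mem_filter, mem_univ, true_and] at hi
      rw [hz1 i hi, one_mul]
    have e2 : ∑ i ∈ Finset.univ.filter (fun i : Fin n => ¬ (i:ℕ) < n - k), z i * u i
        = - ∑ i ∈ Finset.univ.filter (fun i : Fin n => n - k ≤ (i:ℕ)), u i := by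
      rw [← Finset.sum_neg_distrib]
      apply Finset.sum_congr
      · apply Finset.filter_congr; intro i _; simp [not_lt]
      · intro i hi
        simp only [mem_filter, mem_univ, true_and, not_lt] at hi
        rw [hz2 i (not_lt.mpr hi)]; ring
    rw [← hsplit, e1, e2, hhead, htail]
    linarith [hw2]
  -- step 1
  have h1 : ∑ i, h i * w i ≤ ∑ i, A i * u i := by
    have step : ∑ i, h i * w i ≤ ∑ i, |h i| * |w i| := by
      apply Finset.sum_le_sum
      intro i _
      calc h i * w i ≤ |h i * w i| := le_abs_self _
        _ = |h i| * |w i| := abs_mul _ _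
    have e : ∑ i, A i * u i = ∑ i, |h i| * |w i| := by
      rw [← Equiv.sum_comp τ (fun i => |h i| * |w i|)]
      apply Finset.sum_congr rfl
      intro i _
      rw [hAτ i, hu]
    linarith
  -- step 2
  have h2 : ∑ i, A i * u i ≤ ∑ i, (A i - ν * z i) * u i := by
    have e : ∑ i, (A i - ν * z i) * u i
        = ∑ i, A i * u i - ν * ∑ i, z i * u i := by
      rw [Finset.mul_sum, ← Finset.sum_sub_distrib]
      apply Finset.sum_congr rfl
      intro i _; ring
    rw [e]
    nlinarith [mul_nonneg hν0 (neg_nonneg.mpr hzu)]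
  -- step 3
  have h3 : ∑ i, (A i - ν * z i) * u i ≤
      ∑ i ∈ Finset.univ.filter (fun i : Fin n => c ≤ (i:ℕ)),
        max (A i - ν * z i) 0 * u i := by
    rw [← Finset.sum_filter_add_sum_filter_not Finset.univ
      (fun i : Fin n => (i:ℕ) < c) (fun i => (A i - ν * z i) * u i)]
    have hle0 : ∑ i ∈ Finset.univ.filter (fun i : Fin n => (i:ℕ) < c),
        (A i - ν * z i) * u i ≤ 0 := by
      apply Finset.sum_nonpos
      intro i hi
      simp only [mem_filter, mem_univ, true_and] at hi
      have hzi : z i = 1 := hz1 i (lt_of_lt_of_le hi hc)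
      have hAi : A i - ν * z i ≤ 0 := by
        rw [hzi, mul_one]; linarith [hνge i hi]
      exact mul_nonpos_of_nonpos_of_nonneg hAi (hu0 i)
    have heq : Finset.univ.filter (fun i : Fin n => ¬ (i:ℕ) < c)
        = Finset.univ.filter (fun i : Fin n => c ≤ (i:ℕ)) := by
      apply Finset.filter_congr; intro i _; simp [not_lt]
    have hle1 : ∑ i ∈ Finset.univ.filter (fun i : Fin n => ¬ (i:ℕ) < c),
        (A i - ν * z i) * u i ≤
        ∑ i ∈ Finset.univ.filter (fun i : Fin n => c ≤ (i:ℕ)),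
          max (A i - ν * z i) 0 * u i := by
      rw [heq]
      apply Finset.sum_le_sum
      intro i _
      exact mul_le_mul_of_nonneg_right (le_max_left _ _) (hu0 i)
    linarith
  -- step 4: Cauchy-Schwarz
  set s := Finset.univ.filter (fun i : Fin n => c ≤ (i:ℕ)) with hs
  set f : Fin n → ℝ := fun i => max (A i - ν * z i) 0 with hf
  have h4 : ∑ i ∈ s, f i * u i ≤ Real.sqrt (∑ i ∈ s, f i ^ 2) := by
    have hcs := Finset.sum_mul_sq_le_sq_mul_sq s f u
    have hg : ∑ i ∈ s, u i ^ 2 ≤ 1 := by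
      rw [← hsum2]
      exact Finset.sum_le_sum_of_subset_of_nonneg (Finset.subset_univ s)
        (fun i _ _ => sq_nonneg _)
    have hf0 : (0:ℝ) ≤ ∑ i ∈ s, f i ^ 2 := Finset.sum_nonneg fun i _ => sq_nonneg _
    have ht0 : (0:ℝ) ≤ ∑ i ∈ s, f i * u i :=
      Finset.sum_nonneg fun i _ => mul_nonneg (le_max_right _ _) (hu0 i)
    have hsq : (∑ i ∈ s, f i * u i) ^ 2 ≤ ∑ i ∈ s, f i ^ 2 := by
      calc (∑ i ∈ s, f i * u i) ^ 2 ≤ (∑ i ∈ s, f i ^ 2) * (∑ i ∈ s, u i ^ 2) := hcs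
        _ ≤ (∑ i ∈ s, f i ^ 2) * 1 := by
            exact mul_le_mul_of_nonneg_left hg hf0
        _ = ∑ i ∈ s, f i ^ 2 := mul_one _
    calc ∑ i ∈ s, f i * u i = Real.sqrt ((∑ i ∈ s, f i * u i) ^ 2) :=
          (Real.sqrt_sq ht0).symm
      _ ≤ Real.sqrt (∑ i ∈ s, f i ^ 2) := Real.sqrt_le_sqrt hsq
  -- step 5: the algebra
  have h5 : ∑ i ∈ s, f i ^ 2 ≤ (∑ i ∈ s, A i ^ 2) - S ^ 2 / ((n:ℝ) - c) := by
    have hstep : ∑ i ∈ s, f i ^ 2 ≤ ∑ i ∈ s, (A i - ν * z i) ^ 2 := by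
      apply Finset.sum_le_sum
      intro i _
      have h1' : f i ≤ |A i - ν * z i| := max_le (le_abs_self _) (abs_nonneg _)
      have h0' : (0:ℝ) ≤ f i := le_max_right _ _
      calc f i ^ 2 ≤ |A i - ν * z i| ^ 2 := pow_le_pow_left₀ h0' h1' 2
        _ = (A i - ν * z i) ^ 2 := sq_abs _
    have hza : ∑ i ∈ s, z i * A i = S := by
      have hsplit := Finset.sum_filter_add_sum_filter_not Finset.univ
        (fun i : Fin n => (i:ℕ) < c) (fun i => A i * z i)
      have e1 : ∑ i ∈ Finset.univ.filter (fun i : Fin n => (i:ℕ) < c), A i * z i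
          = ∑ i ∈ Finset.univ.filter (fun i : Fin n => (i:ℕ) < c), A i := by
        apply Finset.sum_congr rfl
        intro i hi
        simp only [mem_filter, mem_univ, true_and] at hi
        rw [hz1 i (lt_of_lt_of_le hi hc), mul_one]
      have heq : Finset.univ.filter (fun i : Fin n => ¬ (i:ℕ) < c) = s := by
        rw [hs]; apply Finset.filter_congr; intro i _; simp [not_lt]
      have e2 : ∑ i ∈ s, z i * A i = ∑ i ∈ s, A i * z i := by
        apply Finset.sum_congr rfl; intro i _; ring
      rw [hS, ← hsplit, e1, e2, ← heq]
      ring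
    have hcard : ∑ i ∈ s, z i ^ 2 = (n:ℝ) - c := by
      have : ∑ i ∈ s, z i ^ 2 = ∑ i ∈ s, (1:ℝ) := by
        apply Finset.sum_congr rfl; intro i _; rw [hzsq]
      rw [this, Finset.sum_const, nsmul_eq_mul, mul_one, hs, card_filter_ge hcn.le,
        Nat.cast_sub hcn.le]
    have hexp : ∑ i ∈ s, (A i - ν * z i) ^ 2
        = ∑ i ∈ s, A i ^ 2 - 2 * ν * (∑ i ∈ s, z i * A i) + ν ^ 2 * ∑ i ∈ s, z i ^ 2 := by
      rw [Finset.mul_sum, Finset.mul_sum, ← Finset.sum_sub_distrib, ← Finset.sum_add_distrib]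
      apply Finset.sum_congr rfl
      intro i _; ring
    have hval : ν ^ 2 * ((n:ℝ) - c) = ν * S := by
      calc ν ^ 2 * ((n:ℝ) - c) = ν * (ν * ((n:ℝ) - c)) := by ring
        _ = ν * S := by rw [hνd]
    have hνS : ν * S = S ^ 2 / ((n:ℝ) - c) := by
      rw [hν]
      field_simp
    rw [hexp, hza, hcard, hval] at hstep
    calc ∑ i ∈ s, f i ^ 2 ≤ ∑ i ∈ s, A i ^ 2 - 2 * ν * S + ν * S := hstep
      _ = ∑ i ∈ s, A i ^ 2 - ν * S := by ring
      _ = ∑ i ∈ s, A i ^ 2 - S ^ 2 / ((n:ℝ) - c) := by rw [hνS]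
  calc ∑ i, h i * w i ≤ ∑ i, A i * u i := h1
    _ ≤ ∑ i, (A i - ν * z i) * u i := h2
    _ ≤ ∑ i ∈ s, f i * u i := h3
    _ ≤ Real.sqrt (∑ i ∈ s, f i ^ 2) := h4
    _ ≤ Real.sqrt ((∑ i ∈ s, A i ^ 2) - S ^ 2 / ((n:ℝ) - c)) := Real.sqrt_le_sqrt h5
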